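/- arXiv:0909.1091 — 2 statements merged into one kernel-verified Lean document; each statement's English description precedes it below -/
import Mathlib

section
/- Let x and y be two points of a locally finite set ω ⊂ ℝ². Let S be the square having segment xy as a diagonal, and let T₁, T₂ be the two open triangles into which the diagonal xy divides S. If both T₁ and T₂ contain a point of ω in their interior, then the Voronoi cells of x and y (with respect to ω) are not adjacent, i.e., the intersection of the closures of the cells of x and y contains no point equidistant to x and y and closer to x, y than to all other points of ω. -/
open Set Metric

local notation "E" => EuclideanSpace ℝ (Fin 2)

noncomputable def rot90 (v : E) : E :=
  (WithLp.equiv 2 ((i : Fin 2) → ℝ)).symm ![-(v 1), v 0]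

lemma rot90_inner (v : E) : inner ℝ (rot90 v) v = 0 := by
  simp [rot90, PiLp.inner_apply, Fin.sum_univ_two, WithLp.equiv_symm_apply, PiLp.toLp_apply]
  ring

lemma rot90_inner_self (v : E) : inner ℝ (rot90 v) (rot90 v) = inner ℝ v v := by
  simp only [Matrix.cons_val_zero, Matrix.cons_val_one, Matrix.head_cons, RCLike.inner_apply, conj_trivial, rot90, PiLp.inner_apply, Fin.sum_univ_two, WithLp.equiv_symm_apply, PiLp.toLp_apply]
  ring

lemma key (ω : Set E) (x y z : E) (hxy : x ≠ y) (c : E)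
    (hz : dist z x = dist z y) (hc : dist z c ≤ dist z x)
    (hp : (interior (convexHull ℝ ({x, y, c} : Set E)) ∩ ω).Nonempty)
    (hmin : ∀ w ∈ ω, w ≠ x → w ≠ y → dist z x < dist z w) : False := by
  obtain ⟨p, hpi, hpω⟩ := hp
  have hr : 0 < dist z x := by
    rcases (dist_nonneg : (0:ℝ) ≤ dist z x).lt_or_eq with h | h
    · exact h
    · exfalso
      apply hxy
      have hzx : z = x := by rw [← dist_eq_zero]; exact h.symm
      have hzy : z = y := by rw [← dist_eq_zero, ← hz]; exact h.symm
      rw [← hzx, hzy]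
  have hsub : convexHull ℝ ({x, y, c} : Set E) ⊆ closedBall z (dist z x) := by
    apply convexHull_min _ (convex_closedBall _ _)
    rintro w hw
    simp only [mem_insert_iff, mem_singleton_iff] at hw
    rcases hw with rfl | rfl | rfl
    · rw [mem_closedBall, dist_comm]
    · rw [mem_closedBall, dist_comm]; exact hz.ge
    · rw [mem_closedBall, dist_comm]; exact hc
  have hball : p ∈ ball z (dist z x) := by
    have h1 := interior_mono hsub hpi
    rwa [interior_closedBall z hr.ne'] at h1
  have hlt : dist z p < dist z x := by
    rw [mem_ball, dist_comm] at hball; exact hball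
  have hpx : p ≠ x := by rintro rfl; exact absurd hlt (lt_irrefl _)
  have hpy : p ≠ y := by rintro rfl; rw [hz] at hlt; exact absurd hlt (lt_irrefl _)
  exact absurd (hmin p hpω hpx hpy) (not_lt.2 hlt.le)

/-- The two open triangles into which the diagonal `xy` divides the square `S`
having segment `xy` as a diagonal: the other two corners of `S` are
`midpoint x y ± (1/2) • rot90 (y - x)`.  If both open triangles contain a point of the
locally finite set `ω`, then the Voronoi cells of `x` and `y` are not adjacent: no point is
equidistant to `x` and `y` and strictly closer to `x, y` than to every other point of `ω`. -/
theorem stmt_2 (ω : Set E) (hloc : ∀ (p : E) (r : ℝ), (ω ∩ closedBall p r).Finite)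
    (x y : E) (hx : x ∈ ω) (hy : y ∈ ω) (hxy : x ≠ y)
    (h₁ : (interior (convexHull ℝ
        {x, y, midpoint ℝ x y + (1/2 : ℝ) • rot90 (y - x)}) ∩ ω).Nonempty)
    (h₂ : (interior (convexHull ℝ
        {x, y, midpoint ℝ x y - (1/2 : ℝ) • rot90 (y - x)}) ∩ ω).Nonempty) :
    ¬ ∃ z : E, dist z x = dist z y ∧ ∀ w ∈ ω, w ≠ x → w ≠ y → dist z x < dist z w := by
  rintro ⟨z, hz, hmin⟩
  set v : E := y - x with hv
  set u : E := rot90 (y - x) with hu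
  set m : E := midpoint ℝ x y with hm
  set a : E := z - m with ha
  have hm2 : m = (1/2 : ℝ) • (x + y) := by
    rw [hm, midpoint_eq_smul_add]
    norm_num
  have e1 : z - x = a + (1/2 : ℝ) • v := by rw [ha, hm2, hv]; module
  have e2 : z - y = a - (1/2 : ℝ) • v := by rw [ha, hm2, hv]; module
  have e3 : z - (m + (1/2 : ℝ) • u) = a - (1/2 : ℝ) • u := by rw [ha]; module
  have e4 : z - (m - (1/2 : ℝ) • u) = a + (1/2 : ℝ) • u := by rw [ha]; module
  have huv : inner ℝ u v = 0 := rot90_inner _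
  have huu : ‖u‖ ^ 2 = ‖v‖ ^ 2 := by
    rw [← real_inner_self_eq_norm_sq, ← real_inner_self_eq_norm_sq]
    exact rot90_inner_self _
  have q1 : dist z x ^ 2 = ‖a‖ ^ 2 + inner ℝ a v + (1/4 : ℝ) * ‖v‖ ^ 2 := by
    rw [dist_eq_norm, e1, norm_add_sq_real, real_inner_smul_right, norm_smul]
    norm_num; ring
  have q2 : dist z y ^ 2 = ‖a‖ ^ 2 - inner ℝ a v + (1/4 : ℝ) * ‖v‖ ^ 2 := by
    rw [dist_eq_norm, e2, norm_sub_sq_real, real_inner_smul_right, norm_smul]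
    norm_num; ring
  have hav : inner ℝ a v = 0 := by
    have : dist z x ^ 2 = dist z y ^ 2 := by rw [hz]
    rw [q1, q2] at this; linarith
  rcases le_or_gt 0 (inner ℝ a u) with hpos | hneg
  · refine key ω x y z hxy _ hz ?_ h₁ hmin
    have q3 : dist z (m + (1/2 : ℝ) • u) ^ 2
        = ‖a‖ ^ 2 - inner ℝ a u + (1/4 : ℝ) * ‖u‖ ^ 2 := by
      rw [dist_eq_norm, e3, norm_sub_sq_real, real_inner_smul_right, norm_smul]
      norm_num; ring
    have hsq : dist z (m + (1/2 : ℝ) • u) ^ 2 ≤ dist z x ^ 2 := by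
      rw [q3, q1, hav, huu]; linarith
    exact (pow_le_pow_iff_left₀ dist_nonneg dist_nonneg two_ne_zero).mp hsq
  · refine key ω x y z hxy _ hz ?_ h₂ hmin
    have q4 : dist z (m - (1/2 : ℝ) • u) ^ 2
        = ‖a‖ ^ 2 + inner ℝ a u + (1/4 : ℝ) * ‖u‖ ^ 2 := by
      rw [dist_eq_norm, e4, norm_add_sq_real, real_inner_smul_right, norm_smul]
      norm_num; ring
    have hsq : dist z (m - (1/2 : ℝ) • u) ^ 2 ≤ dist z x ^ 2 := by
      rw [q4, q1, hav, huu]; linarith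
    exact (pow_le_pow_iff_left₀ dist_nonneg dist_nonneg two_ne_zero).mp hsq
end

section
/- Let G be a planar graph and let (T, λ) be an even cycle exhaustion of G with corridors of width 4 (pairwise distances between cycles at least 4, each cycle non-selftouching of even length, interiors nested according to a one-ended tree T, and the complement of the union of cycles having only finite components). Suppose each finite contracted graph G_v is properly 4-colorable. Then G admits a proper 5-coloring. -/
open Set

variable {V ι : Type*}

/-- The subgraph induced by `S` is a (non-selftouching) cycle. -/
def IsInducedCycle (G : SimpleGraph V) (S : Set V) : Prop :=
  S.Finite ∧ 3 ≤ S.ncard ∧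
    (∀ x ∈ S, {y | y ∈ S ∧ G.Adj x y}.ncard = 2) ∧
    (G.induce S).Connected

/-- The sets `A` and `B` are at graph distance at least `n` in `G`. -/
def FarApart (G : SimpleGraph V) (A B : Set V) (n : ℕ) : Prop :=
  ∀ x ∈ A, ∀ y ∈ B, ∀ p : G.Walk x y, n ≤ p.length

/-- `y` is reachable from `x` by a walk avoiding the set `C`. -/
def ReachAvoiding (G : SimpleGraph V) (C : Set V) (x y : V) : Prop :=
  ∃ p : G.Walk x y, ∀ v ∈ p.support, v ∉ C

/-- The interior of a cycle (vertex set `C`) of `G`: the vertices lying in finite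
components of `G \ C`. -/
def interiorOf (G : SimpleGraph V) (C : Set V) : Set V :=
  {x | x ∉ C ∧ {y | ReachAvoiding G C x y}.Finite}

/-- `λ(w) ∪ int(λ(w))`, the block contracted to the vertex `p_v(w)` for a child `w`. -/
def blockOf (G : SimpleGraph V) (lamC : ι → Set V) (w : ι) : Set V :=
  lamC w ∪ interiorOf G (lamC w)

/-- The relation defining the contracted graph `G_v`: ordinary vertices keep the
adjacency of `G`; `λ(v)` is contracted to `Sum.inr v` and, for each child `u` of `v`,
the block `H_u = λ(u) ∪ int(λ(u))` is contracted to `Sum.inr u`. -/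
def contrRel (G : SimpleGraph V) (lamC : ι → Set V) (par : ι → ι) (v : ι) :
    V ⊕ ι → V ⊕ ι → Prop
  | Sum.inl x, Sum.inl y => G.Adj x y
  | Sum.inl x, Sum.inr u =>
      (u = v ∧ ∃ y ∈ lamC v, G.Adj x y) ∨
      (par u = v ∧ u ≠ v ∧ ∃ y ∈ blockOf G lamC u, G.Adj x y)
  | Sum.inr u, Sum.inl x =>
      (u = v ∧ ∃ y ∈ lamC v, G.Adj x y) ∨
      (par u = v ∧ u ≠ v ∧ ∃ y ∈ blockOf G lamC u, G.Adj x y)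
  | Sum.inr u, Sum.inr u' =>
      (u = v ∧ par u' = v ∧ u' ≠ v ∧
        ∃ x ∈ lamC v, ∃ y ∈ blockOf G lamC u', G.Adj x y) ∨
      (u' = v ∧ par u = v ∧ u ≠ v ∧
        ∃ x ∈ lamC v, ∃ y ∈ blockOf G lamC u, G.Adj x y) ∨
      (par u = v ∧ u ≠ v ∧ par u' = v ∧ u' ≠ v ∧ u ≠ u' ∧
        ∃ x ∈ blockOf G lamC u, ∃ y ∈ blockOf G lamC u', G.Adj x y)

/-- The ordinary vertices of `G_v`: vertices of `int(λ(v))` not on `λ(v)` and not in a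
contracted child block. -/
def ordinaryOf (G : SimpleGraph V) (lamC : ι → Set V) (par : ι → ι) (v : ι) : Set V :=
  interiorOf G (lamC v) \
    (lamC v ∪ ⋃ w ∈ {w | par w = v ∧ w ≠ v}, blockOf G lamC w)

/-- The vertex set of the contracted graph `G_v`. -/
def contrVerts (G : SimpleGraph V) (lamC : ι → Set V) (par : ι → ι) (v : ι) :
    Set (V ⊕ ι) :=
  Sum.inl '' ordinaryOf G lamC par v ∪ {Sum.inr v} ∪
    Sum.inr '' {w | par w = v ∧ w ≠ v}

/-- The finite contracted graph `G_v`. -/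
def contrGraph (G : SimpleGraph V) (lamC : ι → Set V) (par : ι → ι) (v : ι) :
    SimpleGraph (contrVerts G lamC par v) :=
  (SimpleGraph.fromRel (contrRel G lamC par v)).induce (contrVerts G lamC par v)


namespace CEx

variable {G : SimpleGraph V} {C D : Set V} {x y z : V}

theorem reach_refl (hx : x ∉ C) : ReachAvoiding G C x x :=
  ⟨SimpleGraph.Walk.nil, by simp [hx]⟩

theorem reach_symm (h : ReachAvoiding G C x y) : ReachAvoiding G C y x := by
  obtain ⟨p, hp⟩ := h
  exact ⟨p.reverse, by simpa using hp⟩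

theorem reach_trans (h : ReachAvoiding G C x y) (h' : ReachAvoiding G C y z) :
    ReachAvoiding G C x z := by
  obtain ⟨p, hp⟩ := h; obtain ⟨q, hq⟩ := h'
  refine ⟨p.append q, fun v hv => ?_⟩
  rcases (SimpleGraph.Walk.mem_support_append_iff _ _).1 hv with h | h
  · exact hp v h
  · exact hq v h

theorem reach_mem_left (h : ReachAvoiding G C x y) : x ∉ C := by
  obtain ⟨p, hp⟩ := h; exact hp x p.start_mem_support

theorem reach_mem_right (h : ReachAvoiding G C x y) : y ∉ C := by
  obtain ⟨p, hp⟩ := h; exact hp y p.end_mem_support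

theorem reach_adj (h : ReachAvoiding G C x y) (hyz : G.Adj y z) (hz : z ∉ C) :
    ReachAvoiding G C x z := by
  refine reach_trans h ⟨hyz.toWalk, ?_⟩
  intro v hv
  simp only [SimpleGraph.Walk.support_cons, SimpleGraph.Walk.support_nil,
    List.mem_cons, List.mem_singleton] at hv
  rcases hv with rfl | hv
  · exact reach_mem_right h
  · rcases hv with rfl | hv
    · exact hz
    · simp at hv

theorem reach_set_eq (h : ReachAvoiding G C x y) :
    {z | ReachAvoiding G C x z} = {z | ReachAvoiding G C y z} := by
  ext z
  exact ⟨fun hz => reach_trans (reach_symm h) hz, fun hz => reach_trans h hz⟩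

theorem mem_interior (hx : x ∉ C) (hfin : {y | ReachAvoiding G C x y}.Finite) :
    x ∈ interiorOf G C := ⟨hx, hfin⟩

theorem interior_reach (hx : x ∈ interiorOf G C) (h : ReachAvoiding G C x y) :
    y ∈ interiorOf G C := by
  refine ⟨reach_mem_right h, ?_⟩
  rw [← reach_set_eq h]; exact hx.2

theorem interior_adj (hx : x ∈ interiorOf G C) (hxy : G.Adj x y) (hy : y ∉ C) :
    y ∈ interiorOf G C :=
  interior_reach hx (reach_adj (reach_refl hx.1) hxy hy)

/-- A walk whose endpoints are connected avoiding `C`, starting from a point whose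
reach class avoiding `C` is finite: the reach set is in the interior. -/
theorem interior_reach_of_mem (hx : x ∈ interiorOf G C) :
    {y | ReachAvoiding G C x y} ⊆ interiorOf G C := fun _ h => interior_reach hx h

end CEx
namespace CEx

variable {G : SimpleGraph V} {C D U S A B : Set V} {x y z : V}

theorem cycle_nonempty (h : IsInducedCycle G S) : S.Nonempty := by
  rcases h with ⟨hfin, h3, -, -⟩
  rcases Set.eq_empty_or_nonempty S with rfl | h
  · simp [Set.ncard_empty] at h3
  · exact h

theorem far_not_mem (hfar : FarApart G A B 4) (hx : x ∈ A) : x ∉ B := by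
  intro hxB
  have := hfar x hx x hxB SimpleGraph.Walk.nil
  simp at this

theorem far_no_edge (hfar : FarApart G A B 4) (hx : x ∈ A) (hy : y ∈ B) : ¬ G.Adj x y := by
  intro h
  have := hfar x hx y hy h.toWalk
  simp at this

/-- `FarApart _ _ _ 4` forbids a path x - y - z with x ∈ A, z ∈ B. -/
theorem far_no_two (hfar : FarApart G A B 4) (hx : x ∈ A) (hz : z ∈ B)
    (h1 : G.Adj x y) (h2 : G.Adj y z) : False := by
  have := hfar x hx z hz (SimpleGraph.Walk.cons h1 h2.toWalk)
  simp at this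

/-- `FarApart _ _ _ 4` forbids a path x - y - y' - z with x ∈ A, z ∈ B. -/
theorem far_no_three {y' : V} (hfar : FarApart G A B 4) (hx : x ∈ A) (hz : z ∈ B)
    (h1 : G.Adj x y) (h2 : G.Adj y y') (h3 : G.Adj y' z) : False := by
  have := hfar x hx z hz (SimpleGraph.Walk.cons h1 (SimpleGraph.Walk.cons h2 h3.toWalk))
  simp at this

/-- Two vertices of an induced cycle are connected avoiding any set disjoint from it. -/
theorem cycle_reach (h : IsInducedCycle G S) (hx : x ∈ S) (hy : y ∈ S)
    (hC : ∀ z ∈ S, z ∉ C) : ReachAvoiding G C x y := by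
  obtain ⟨-, -, -, hconn⟩ := h
  obtain ⟨p⟩ := hconn ⟨x, hx⟩ ⟨y, hy⟩
  let f : G.induce S →g G := ⟨Subtype.val, fun {a b} h => h⟩
  refine ⟨p.map f, fun v hv => ?_⟩
  rw [SimpleGraph.Walk.support_map] at hv
  obtain ⟨a, -, rfl⟩ := List.mem_map.1 hv
  exact hC a.1 a.2

theorem cycle_subset_interior (h : IsInducedCycle G S) (hz : z ∈ S)
    (hzi : z ∈ interiorOf G C) (hC : ∀ w ∈ S, w ∉ C) : S ⊆ interiorOf G C :=
  fun _ hw => interior_reach hzi (cycle_reach h hz hw hC)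

/-- Claim N : if `U` is a finite set inside the interior of `D`, anything in the
interior of `U` and not on `D` is in the interior of `D`. -/
theorem interior_cascade (hUfin : U.Finite) (hU : U ⊆ interiorOf G D)
    (hx : x ∈ interiorOf G U) (hxD : x ∉ D) : x ∈ interiorOf G D := by
  refine ⟨hxD, Set.Finite.subset
    (Set.Finite.union hx.2 (Set.Finite.biUnion hUfin (fun z hz => (hU hz).2))) ?_⟩
  classical
  rintro y ⟨p, hp⟩
  by_cases hsup : ∀ v ∈ p.support, v ∉ U
  · exact Set.mem_union_left _ ⟨p, hsup⟩
  · push_neg at hsup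
    obtain ⟨w, hwsup, hwU⟩ := hsup
    refine Set.mem_union_right _ (Set.mem_biUnion hwU ?_)
    exact ⟨p.dropUntil w hwsup, fun v hv => hp v (p.support_dropUntil_subset hwsup hv)⟩

theorem comp_subset_closed (hcl : ∀ a ∈ S, ∀ b, G.Adj a b → b ∈ S) (hx : x ∈ S) :
    {y | G.Reachable x y} ⊆ S := by
  have H : ∀ (a b : V) (q : G.Walk a b), a ∈ S → b ∈ S := by
    intro a b q
    induction q with
    | nil => exact id
    | cons h q ih => exact fun ha => ih (hcl _ ha _ h)
  rintro y ⟨p⟩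
  exact H x y p hx

theorem comp_trapped (hno : ∀ r c, ReachAvoiding G C x r → G.Adj r c → c ∉ C)
    (hx : x ∉ C) : ∀ {y}, G.Reachable x y → ReachAvoiding G C x y := by
  have H : ∀ (a b : V) (q : G.Walk a b), ReachAvoiding G C x a → ReachAvoiding G C x b := by
    intro a b q
    induction q with
    | nil => exact id
    | cons h q ih =>
      exact fun hxa => ih (reach_adj hxa h (hno _ _ hxa h))
  rintro y ⟨p⟩
  exact H x y p (reach_refl hx)

end CEx
namespace CEx

variable {G : SimpleGraph V} {lamC : ι → Set V} {par : ι → ι} {C : Set V} {x y z : V}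
  {u v w t : ι}

theorem reach_mono {C' : Set V} (hsub : C' ⊆ C) (h : ReachAvoiding G C x y) :
    ReachAvoiding G C' x y := by
  obtain ⟨p, hp⟩ := h
  exact ⟨p, fun v hv hvC => hp v hv (hsub hvC)⟩

section Tree

theorem par_ne (htree₂ : ∀ (v : ι) (n : ℕ), par^[n + 1] v ≠ v) (v : ι) : par v ≠ v := by
  have := htree₂ v 0
  simpa using this

theorem children_subset_desc :
    {w | par w = v ∧ w ≠ v} ⊆ {w | ∃ n : ℕ, par^[n] w = v} :=
  fun w hw => ⟨1, by simpa using hw.1⟩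

theorem children_finite (htree₁ : ∀ v : ι, {w | ∃ n : ℕ, par^[n] w = v}.Finite) (v : ι) :
    {w | par w = v ∧ w ≠ v}.Finite :=
  (htree₁ v).subset children_subset_desc

theorem desc_ssubset (htree₁ : ∀ v : ι, {w | ∃ n : ℕ, par^[n] w = v}.Finite)
    (htree₂ : ∀ (v : ι) (n : ℕ), par^[n + 1] v ≠ v)
    (hu : par u = v) (hne : u ≠ v) :
    (htree₁ u).toFinset.card < (htree₁ v).toFinset.card := by
  apply Finset.card_lt_card
  constructor
  · intro w hw
    simp only [Set.Finite.mem_toFinset, Set.mem_setOf_eq] at hw ⊢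
    obtain ⟨n, rfl⟩ := hw
    exact ⟨n + 1, by rw [Function.iterate_succ_apply']; exact hu⟩
  · intro hsub
    have hv : v ∈ (htree₁ v).toFinset := by
      simp only [Set.Finite.mem_toFinset, Set.mem_setOf_eq]
      exact ⟨0, rfl⟩
    have := hsub hv
    simp only [Set.Finite.mem_toFinset, Set.mem_setOf_eq] at this
    obtain ⟨n, hn⟩ := this
    exact htree₂ v n (by rw [Function.iterate_succ_apply', hn, hu])

theorem exists_childless (htree₁ : ∀ v : ι, {w | ∃ n : ℕ, par^[n] w = v}.Finite)
    (htree₂ : ∀ (v : ι) (n : ℕ), par^[n + 1] v ≠ v) [Nonempty ι] :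
    ∃ t : ι, ∀ w, ¬ (par w = t ∧ w ≠ t) := by
  obtain ⟨v⟩ := ‹Nonempty ι›
  have H : ∀ (n : ℕ) (v : ι), (htree₁ v).toFinset.card = n →
      ∃ t : ι, ∀ w, ¬ (par w = t ∧ w ≠ t) := by
    intro n
    induction n using Nat.strong_induction_on with
    | _ n ih =>
      intro v hcard
      by_cases hch : ∃ u, par u = v ∧ u ≠ v
      · obtain ⟨u, hu, hne⟩ := hch
        exact ih _ (hcard ▸ desc_ssubset htree₁ htree₂ hu hne) u rfl
      · push_neg at hch
        exact ⟨v, fun w hw => hw.2 (hch w hw.1)⟩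
  exact H _ v rfl

end Tree

section Struct

theorem ordinary_finite (hGvfin : ∀ v, (contrVerts G lamC par v).Finite) (v : ι) :
    (ordinaryOf G lamC par v).Finite := by
  have h1 : (Sum.inl '' ordinaryOf G lamC par v).Finite :=
    (hGvfin v).subset (fun a ha => Or.inl (Or.inl ha))
  exact Set.Finite.of_finite_image h1 Sum.inl_injective.injOn

theorem interior_decomp (hx : x ∈ interiorOf G (lamC v)) :
    x ∈ ordinaryOf G lamC par v ∨
      ∃ u, par u = v ∧ u ≠ v ∧ x ∈ blockOf G lamC u := by
  by_cases h : x ∈ lamC v ∪ ⋃ w ∈ {w | par w = v ∧ w ≠ v}, blockOf G lamC w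
  · rcases h with h | h
    · exact absurd h hx.1
    · simp only [Set.mem_iUnion, Set.mem_setOf_eq] at h
      obtain ⟨u, ⟨h1, h2⟩, h3⟩ := h
      exact Or.inr ⟨u, h1, h2, h3⟩
  · exact Or.inl ⟨hx, h⟩

theorem interior_finite (htree₁ : ∀ v : ι, {w | ∃ n : ℕ, par^[n] w = v}.Finite)
    (htree₂ : ∀ (v : ι) (n : ℕ), par^[n + 1] v ≠ v)
    (hcyc : ∀ v, IsInducedCycle G (lamC v))
    (hGvfin : ∀ v, (contrVerts G lamC par v).Finite) (v : ι) :
    (interiorOf G (lamC v)).Finite := by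
  have H : ∀ (n : ℕ) (v : ι), (htree₁ v).toFinset.card = n →
      (interiorOf G (lamC v)).Finite := by
    intro n
    induction n using Nat.strong_induction_on with
    | _ n ih =>
      intro v hcard
      have hblocks : (⋃ w ∈ {w | par w = v ∧ w ≠ v}, blockOf G lamC w).Finite := by
        apply Set.Finite.biUnion (children_finite htree₁ v)
        intro u hu
        exact ((hcyc u).1).union
          (ih _ (hcard ▸ desc_ssubset htree₁ htree₂ hu.1 hu.2) u rfl)
      apply Set.Finite.subset ((ordinary_finite hGvfin v).union hblocks)
      intro x hx
      rcases interior_decomp (par := par) hx with h | ⟨u, h1, h2, h3⟩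
      · exact Or.inl h
      · refine Or.inr ?_
        simp only [Set.mem_iUnion]
        exact ⟨u, ⟨h1, h2⟩, h3⟩
  exact H _ v rfl

theorem block_finite (htree₁ : ∀ v : ι, {w | ∃ n : ℕ, par^[n] w = v}.Finite)
    (htree₂ : ∀ (v : ι) (n : ℕ), par^[n + 1] v ≠ v)
    (hcyc : ∀ v, IsInducedCycle G (lamC v))
    (hGvfin : ∀ v, (contrVerts G lamC par v).Finite) (v : ι) :
    (blockOf G lamC v).Finite :=
  ((hcyc v).1).union (interior_finite htree₁ htree₂ hcyc hGvfin v)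

theorem cycles_disjoint (hfar : ∀ v w, v ≠ w → FarApart G (lamC v) (lamC w) 4)
    (hvw : v ≠ w) (hx : x ∈ lamC v) : x ∉ lamC w :=
  far_not_mem (hfar v w hvw) hx

theorem exists_block (hcyc : ∀ v, IsInducedCycle G (lamC v))
    (hfar : ∀ v w, v ≠ w → FarApart G (lamC v) (lamC w) 4)
    (htree₂ : ∀ (v : ι) (n : ℕ), par^[n + 1] v ≠ v)
    (hnest : ∀ w, lamC w ⊆ interiorOf G (lamC (par w)))
    (hexh : ∀ x ∉ ⋃ v, lamC v, {y | ReachAvoiding G (⋃ v, lamC v) x y}.Finite)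
    [Nonempty ι] (x : V) :
    ∃ v, x ∈ lamC v ∪ interiorOf G (lamC v) := by
  by_cases hxc : ∃ v, x ∈ lamC v
  · obtain ⟨v, hv⟩ := hxc
    exact ⟨v, Or.inl hv⟩
  · push_neg at hxc
    have hxU : x ∉ ⋃ v, lamC v := by simpa using hxc
    by_cases hadj : ∃ r c, ReachAvoiding G (⋃ v, lamC v) x r ∧ G.Adj r c ∧ ∃ u, c ∈ lamC u
    · obtain ⟨r, c, hr, hrc, u, hcu⟩ := hadj
      refine ⟨par u, Or.inr ?_⟩
      have hcne : c ∉ lamC (par u) :=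
        cycles_disjoint hfar (fun h => par_ne htree₂ u h.symm) hcu
      have hreach : ReachAvoiding G (lamC (par u)) x c := by
        refine reach_adj (reach_mono ?_ hr) hrc hcne
        exact Set.subset_iUnion _ _
      exact interior_reach (hnest u hcu) (reach_symm hreach)
    · push_neg at hadj
      refine ⟨Classical.arbitrary ι, Or.inr ⟨fun h => hxc _ h, ?_⟩⟩
      apply Set.Finite.subset (hexh x hxU)
      rintro y ⟨p, hp⟩
      refine comp_trapped (fun r c hr hrc hcU => ?_) hxU ⟨p⟩
      simp only [Set.mem_iUnion] at hcU
      obtain ⟨u, hcu⟩ := hcU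
      exact hadj r c hr hrc u hcu

end Struct

end CEx
namespace CEx

section EvenCycle

variable {G : SimpleGraph V} {S : Set V}

theorem even_cycle_two_coloring (hS : IsInducedCycle G S) (heven : Even S.ncard) :
    ∃ f : V → Bool, ∀ x ∈ S, ∀ y ∈ S, G.Adj x y → f x ≠ f y := by
  classical
  obtain ⟨x0, hx0⟩ := cycle_nonempty hS
  obtain ⟨hfin, h3, hdeg, hconn⟩ := hS
  set NS : V → Set V := fun x => {y | y ∈ S ∧ G.Adj x y} with hNS
  have hNsub : ∀ x, NS x ⊆ S := fun x y hy => hy.1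
  have hNsymm : ∀ x ∈ S, ∀ y, y ∈ NS x → x ∈ NS y := fun x hx y hy => ⟨hx, hy.2.symm⟩
  have hpair2 : ∀ x ∈ S, ∃ a b : V, a ≠ b ∧ NS x = {a, b} := by
    intro x hx
    exact Set.ncard_eq_two.1 (hdeg x hx)
  have hpair : ∀ x ∈ S, ∀ a ∈ NS x, ∀ b ∈ NS x, ∀ c ∈ NS x,
      b ≠ a → c ≠ a → b = c := by
    intro x hx a ha b hb c hc hba hca
    obtain ⟨p, q, hpq, hset⟩ := hpair2 x hx
    rw [hset] at ha hb hc
    rcases ha with rfl | rfl <;> rcases hb with rfl | rfl <;> rcases hc with rfl | rfl <;>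
      first | rfl | (exfalso; exact hba rfl) | (exfalso; exact hca rfl)
  have hex : ∀ x ∈ S, ∀ a ∈ NS x, ∃ b, b ∈ NS x ∧ b ≠ a := by
    intro x hx a ha
    obtain ⟨p, q, hpq, hset⟩ := hpair2 x hx
    rw [hset] at ha ⊢
    rcases ha with rfl | rfl
    · exact ⟨q, Or.inr rfl, hpq.symm⟩
    · exact ⟨p, Or.inl rfl, hpq⟩
  have hN0 : (NS x0).Nonempty := by
    obtain ⟨p, q, hpq, hset⟩ := hpair2 x0 hx0
    exact ⟨p, by rw [hset]; exact Or.inl rfl⟩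
  obtain ⟨a0, ha0⟩ := hN0
  -- the traversal sequence
  let onbr : V → V → V := fun y x => if h : ∃ b, b ∈ NS y ∧ b ≠ x then h.choose else x0
  have honbr : ∀ y ∈ S, ∀ x ∈ NS y, onbr y x ∈ NS y ∧ onbr y x ≠ x := by
    intro y hy x hx
    have h : ∃ b, b ∈ NS y ∧ b ≠ x := hex y hy x hx
    simp only [onbr, dif_pos h]
    exact h.choose_spec
  let st : ℕ → V × V := fun n => Nat.rec (x0, a0) (fun _ p => (p.2, onbr p.2 p.1)) n
  let g : ℕ → V := fun n => (st n).1
  have hg0 : g 0 = x0 := rfl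
  have hgs : ∀ n, g (n + 1) = (st n).2 := fun n => rfl
  have hgdef : ∀ n, g (n + 2) = onbr (g (n + 1)) (g n) := by
    intro n
    rfl
  have hQ : ∀ n, g n ∈ S ∧ g (n + 1) ∈ NS (g n) := by
    intro n
    induction n with
    | zero => exact ⟨hx0, ha0⟩
    | succ n ih =>
      have h1 : g (n + 1) ∈ S := (hNsub _ ih.2)
      have h2 := honbr (g (n + 1)) h1 (g n) (hNsymm _ ih.1 _ ih.2)
      rw [← hgdef n] at h2
      exact ⟨h1, h2.1⟩
  have hmemS : ∀ n, g n ∈ S := fun n => (hQ n).1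
  have hadj : ∀ n, G.Adj (g n) (g (n + 1)) := fun n => (hQ n).2.2
  have hR : ∀ n, g (n + 2) ≠ g n := by
    intro n
    have h1 : g (n + 1) ∈ S := hmemS (n + 1)
    have h2 := honbr (g (n + 1)) h1 (g n) (hNsymm _ (hQ n).1 _ (hQ n).2)
    rw [← hgdef n] at h2
    exact h2.2
  have hne1 : ∀ n, g (n + 1) ≠ g n := fun n => (hadj n).symm.ne
  -- the first repetition
  have hrepex : ∃ n, ∃ m, m < n ∧ g m = g n := by
    haveI : Finite ↥S := hfin.to_subtype
    obtain ⟨m, n, hmn, he⟩ :=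
      Finite.exists_ne_map_eq_of_infinite (fun n : ℕ => (⟨g n, hmemS n⟩ : ↥S))
    rcases lt_or_gt_of_ne hmn with h | h
    · exact ⟨n, m, h, by simpa using he⟩
    · exact ⟨m, n, h, by simpa using he.symm⟩
  let P : ℕ → Prop := fun n => ∃ m, m < n ∧ g m = g n
  have hPd : DecidablePred P := fun n => Classical.dec _
  let N : ℕ := @Nat.find P hPd hrepex
  obtain ⟨m0, hm0N, hm0eq⟩ : P N := @Nat.find_spec P hPd hrepex
  have hinj : ∀ i j, i < j → j < N → g i ≠ g j := by
    intro i j hij hjN he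
    exact @Nat.find_min P hPd hrepex j hjN ⟨i, hij, he⟩
  have hN1 : 1 ≤ N := by omega
  have hgne : ∀ i j, i < N → j < N → i ≠ j → g i ≠ g j := by
    intro i j hi hj hij
    rcases Nat.lt_or_ge i j with h | h
    · exact hinj i j h hj
    · exact fun he => hinj j i (by omega) hi he.symm
  have hm00 : m0 = 0 := by
    by_contra hm0
    have hm1 : 1 ≤ m0 := Nat.one_le_iff_ne_zero.2 hm0
    have hA : m0 ≠ N - 1 := by
      intro h
      have h2 : g (N - 1 + 1) ≠ g (N - 1) := hne1 (N - 1)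
      rw [show N - 1 + 1 = N by omega] at h2
      rw [h] at hm0eq
      exact h2 hm0eq.symm
    have hN2 : 2 ≤ N := by omega
    have hB : m0 ≠ N - 2 := by
      intro h
      have h2 := hR (N - 2)
      rw [show N - 2 + 2 = N by omega] at h2
      rw [h] at hm0eq
      exact h2 hm0eq.symm
    have hm3 : m0 + 3 ≤ N := by omega
    have h1 : g (m0 - 1) ∈ NS (g m0) := by
      have h := (hQ (m0 - 1)).2
      rw [show m0 - 1 + 1 = m0 by omega] at h
      exact hNsymm _ (hmemS (m0 - 1)) _ h
    have h2 : g (m0 + 1) ∈ NS (g m0) := (hQ m0).2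
    have h3' : g (N - 1) ∈ NS (g m0) := by
      have h := (hQ (N - 1)).2
      rw [show N - 1 + 1 = N by omega, ← hm0eq] at h
      exact hNsymm _ (hmemS (N - 1)) _ h
    have d1 : g (m0 - 1) ≠ g (m0 + 1) := by
      have h := hR (m0 - 1)
      rw [show m0 - 1 + 2 = m0 + 1 by omega] at h
      exact fun he => h he.symm
    have d2 : g (N - 1) ≠ g (m0 + 1) :=
      hgne (N - 1) (m0 + 1) (by omega) (by omega) (by omega)
    have heq := hpair (g m0) (hmemS m0) (g (m0 + 1)) h2 (g (m0 - 1)) h1 (g (N - 1)) h3' d1 d2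
    exact hgne (m0 - 1) (N - 1) (by omega) (by omega) (by omega) heq
  rw [hm00] at hm0eq
  have hN3 : 3 ≤ N := by
    by_contra hlt
    have : N = 1 ∨ N = 2 := by omega
    rcases this with h | h
    · rw [h] at hm0eq
      exact hne1 0 hm0eq.symm
    · rw [h] at hm0eq
      exact hR 0 hm0eq.symm
  -- neighbour structure
  have hnbr : ∀ k, k < N → ∀ z, z ∈ NS (g k) →
      ∃ l, l < N ∧ g l = z ∧
        ((1 ≤ k ∧ l = k - 1) ∨ (k + 1 < N ∧ l = k + 1) ∨
          (k = 0 ∧ l = N - 1) ∨ (k = N - 1 ∧ l = 0)) := by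
    intro k hk z hz
    have hprev : ∀ j, 1 ≤ j → j < N → g (j - 1) ∈ NS (g j) := by
      intro j h1 h2
      have h := (hQ (j - 1)).2
      rw [show j - 1 + 1 = j by omega] at h
      exact hNsymm _ (hmemS (j - 1)) _ h
    have hlast : g (N - 1) ∈ NS (g 0) := by
      have h := (hQ (N - 1)).2
      rw [show N - 1 + 1 = N by omega, ← hm0eq] at h
      exact hNsymm _ (hmemS (N - 1)) _ h
    have hfirst : g 0 ∈ NS (g (N - 1)) := hNsymm _ (hmemS 0) _ hlast
    by_cases hk0 : k = 0
    · subst hk0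
      -- neighbours are g (N-1) and g 1
      have hn1 : g 1 ∈ NS (g 0) := (hQ 0).2
      by_cases hz1 : z = g (N - 1)
      · exact ⟨N - 1, by omega, hz1.symm, by omega⟩
      · have : g 1 = z :=
          hpair (g 0) (hmemS 0) (g (N - 1)) hlast (g 1) hn1 z hz
            (hgne 1 (N - 1) (by omega) (by omega) (by omega)) (fun h => hz1 h)
        exact ⟨1, by omega, this, by omega⟩
    · by_cases hkN : k = N - 1
      · subst hkN
        have hpv : g (N - 2) ∈ NS (g (N - 1)) := by
          have h := hprev (N - 1) (by omega) (by omega)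
          rw [show N - 1 - 1 = N - 2 by omega] at h
          exact h
        by_cases hz1 : z = g 0
        · exact ⟨0, by omega, hz1.symm, by omega⟩
        · have : g (N - 2) = z :=
            hpair (g (N - 1)) (hmemS (N - 1)) (g 0) hfirst (g (N - 2)) hpv z hz
              (hgne (N - 2) 0 (by omega) (by omega) (by omega)) (fun h => hz1 h)
          exact ⟨N - 2, by omega, this, by omega⟩
      · have hk1 : 1 ≤ k := by omega
        have hkN' : k + 1 < N := by omega
        have hpv : g (k - 1) ∈ NS (g k) := hprev k hk1 hk
        have hnx : g (k + 1) ∈ NS (g k) := (hQ k).2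
        by_cases hz1 : z = g (k - 1)
        · exact ⟨k - 1, by omega, hz1.symm, by omega⟩
        · have : g (k + 1) = z :=
            hpair (g k) (hmemS k) (g (k - 1)) hpv (g (k + 1)) hnx z hz
              (hgne (k + 1) (k - 1) (by omega) (by omega) (by omega)) (fun h => hz1 h)
          exact ⟨k + 1, by omega, this, by omega⟩
  -- surjectivity
  have hsurj : ∀ y ∈ S, ∃ k, k < N ∧ g k = y := by
    have H : ∀ (a b : ↥S) (q : (G.induce S).Walk a b),
        (∃ k, k < N ∧ g k = a.1) → ∃ k, k < N ∧ g k = b.1 := by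
      intro a b q
      induction q with
      | nil => exact id
      | @cons a c b hadj' q ih =>
        rintro ⟨k, hk, he⟩
        apply ih
        have hcz : (c : V) ∈ NS (g k) := by
          rw [he]
          exact ⟨c.2, hadj'⟩
        obtain ⟨l, hl, hgl, -⟩ := hnbr k hk _ hcz
        exact ⟨l, hl, hgl⟩
    intro y hy
    obtain ⟨p⟩ := hconn ⟨x0, hx0⟩ ⟨y, hy⟩
    exact H _ _ p ⟨0, by omega, hg0⟩
  -- cardinality
  have hcard : S.ncard = N := by
    have himg : S = ↑((Finset.range N).image g) := by
      ext y
      simp only [Finset.coe_image, Finset.coe_range, Set.mem_image, Set.mem_Iio]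
      constructor
      · intro hy
        obtain ⟨k, hk, he⟩ := hsurj y hy
        exact ⟨k, hk, he⟩
      · rintro ⟨k, -, rfl⟩
        exact hmemS k
    rw [himg, Set.ncard_coe_finset, Finset.card_image_of_injOn, Finset.card_range]
    intro i hi j hj hij
    by_contra hne
    exact hgne i j (Finset.mem_range.1 hi) (Finset.mem_range.1 hj) hne hij
  have hNeven : Even N := hcard ▸ heven
  obtain ⟨t, ht⟩ := hNeven
  -- the colouring
  refine ⟨fun y => if h : ∃ k, k < N ∧ g k = y then decide (h.choose % 2 = 0) else false, ?_⟩
  intro x hx y hy hxy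
  obtain ⟨k, hk, rfl⟩ := hsurj x hx
  obtain ⟨l, hl, rfl⟩ := hsurj y hy
  have heval : ∀ j, j < N →
      (if h : ∃ i, i < N ∧ g i = g j then decide (h.choose % 2 = 0) else false) =
        decide (j % 2 = 0) := by
    intro j hj
    have h : ∃ i, i < N ∧ g i = g j := ⟨j, hj, rfl⟩
    rw [dif_pos h]
    have hspec := h.choose_spec
    have hje : h.choose = j := by
      by_contra hne
      exact hgne _ _ hspec.1 hj hne hspec.2
    rw [hje]
  simp only [heval k hk, heval l hl]
  have hmem : g l ∈ NS (g k) := ⟨hmemS l, hxy⟩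
  obtain ⟨l', hl', hgl', hcase⟩ := hnbr k hk _ hmem
  have hll : l' = l := by
    by_contra hne
    exact hgne l' l hl' hl hne hgl'
  subst hll
  simp only [ne_eq, decide_eq_decide]
  omega

end EvenCycle

end CEx
namespace CEx

section Contr

variable {G : SimpleGraph V} {lamC : ι → Set V} {par : ι → ι} {x y z : V} {u v w : ι}

theorem mem_cv_ord (hx : x ∈ ordinaryOf G lamC par v) :
    Sum.inl x ∈ contrVerts G lamC par v := Or.inl (Or.inl ⟨x, hx, rfl⟩)

theorem mem_cv_v : (Sum.inr v : V ⊕ ι) ∈ contrVerts G lamC par v :=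
  Or.inl (Or.inr rfl)

theorem mem_cv_child (h1 : par u = v) (h2 : u ≠ v) :
    (Sum.inr u : V ⊕ ι) ∈ contrVerts G lamC par v := Or.inr ⟨u, ⟨h1, h2⟩, rfl⟩

theorem cadj_ord (hx : x ∈ ordinaryOf G lamC par v) (hy : y ∈ ordinaryOf G lamC par v)
    (hadj : G.Adj x y) :
    (contrGraph G lamC par v).Adj ⟨Sum.inl x, mem_cv_ord hx⟩ ⟨Sum.inl y, mem_cv_ord hy⟩ := by
  show (SimpleGraph.fromRel _).Adj (Sum.inl x) (Sum.inl y)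
  rw [SimpleGraph.fromRel_adj]
  exact ⟨by simpa using hadj.ne, Or.inl hadj⟩

theorem cadj_cyc (hx : x ∈ ordinaryOf G lamC par v) (hz : z ∈ lamC v) (hadj : G.Adj x z) :
    (contrGraph G lamC par v).Adj ⟨Sum.inl x, mem_cv_ord hx⟩ ⟨Sum.inr v, mem_cv_v⟩ := by
  show (SimpleGraph.fromRel _).Adj (Sum.inl x) (Sum.inr v)
  rw [SimpleGraph.fromRel_adj]
  exact ⟨by simp, Or.inl (Or.inl ⟨rfl, z, hz, hadj⟩)⟩

theorem cadj_block (hx : x ∈ ordinaryOf G lamC par v) (h1 : par u = v) (h2 : u ≠ v)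
    (hz : z ∈ blockOf G lamC u) (hadj : G.Adj x z) :
    (contrGraph G lamC par v).Adj ⟨Sum.inl x, mem_cv_ord hx⟩ ⟨Sum.inr u, mem_cv_child h1 h2⟩ := by
  show (SimpleGraph.fromRel _).Adj (Sum.inl x) (Sum.inr u)
  rw [SimpleGraph.fromRel_adj]
  exact ⟨by simp, Or.inl (Or.inr ⟨h1, h2, z, hz, hadj⟩)⟩

end Contr

section Struct2

variable {G : SimpleGraph V} {lamC : ι → Set V} {par : ι → ι} {x y z : V} {u v w : ι}

/-- An edge from the interior of a block stays in the block. -/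
theorem interior_block_adj (hx : x ∈ interiorOf G (lamC u)) (hadj : G.Adj x y) :
    y ∈ blockOf G lamC u := by
  by_cases hy : y ∈ lamC u
  · exact Or.inl hy
  · exact Or.inr (interior_adj hx hadj hy)

/-- An ordinary vertex touches a child block only on its cycle. -/
theorem ord_touch_block (hx : x ∈ ordinaryOf G lamC par v) (h1 : par u = v) (h2 : u ≠ v)
    (hy : y ∈ blockOf G lamC u) (hadj : G.Adj x y) : y ∈ lamC u := by
  rcases hy with hy | hy
  · exact hy
  · exfalso
    have hxl : x ∉ lamC u := by
      intro hxl
      refine hx.2 (Or.inr ?_)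
      simp only [Set.mem_iUnion]
      exact ⟨u, ⟨h1, h2⟩, Or.inl hxl⟩
    have : x ∈ blockOf G lamC u := Or.inr (interior_adj hy hadj.symm hxl)
    refine hx.2 (Or.inr ?_)
    simp only [Set.mem_iUnion]
    exact ⟨u, ⟨h1, h2⟩, this⟩

/-- Mutually interior cycles make the whole component finite. -/
theorem mutual_comp_finite (htree₁ : ∀ v : ι, {w | ∃ n : ℕ, par^[n] w = v}.Finite)
    (htree₂ : ∀ (v : ι) (n : ℕ), par^[n + 1] v ≠ v)
    (hcyc : ∀ v, IsInducedCycle G (lamC v))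
    (hGvfin : ∀ v, (contrVerts G lamC par v).Finite)
    (hab : lamC u ⊆ interiorOf G (lamC w)) (hba : lamC w ⊆ interiorOf G (lamC u))
    (hz : z ∈ blockOf G lamC u) : {y | G.Reachable z y}.Finite := by
  have hS : (blockOf G lamC u ∪ blockOf G lamC w).Finite :=
    (block_finite htree₁ htree₂ hcyc hGvfin u).union (block_finite htree₁ htree₂ hcyc hGvfin w)
  apply hS.subset
  refine comp_subset_closed (S := blockOf G lamC u ∪ blockOf G lamC w) ?_ (Or.inl hz)
  rintro a (ha | ha) b hab'
  · rcases ha with ha | ha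
    · exact Or.inr (interior_block_adj (hab ha) hab')
    · exact Or.inl (interior_block_adj ha hab')
  · rcases ha with ha | ha
    · exact Or.inl (interior_block_adj (hba ha) hab')
    · exact Or.inr (interior_block_adj ha hab')

/-- Trichotomy: two blocks meeting at a point are nested, or the component is finite. -/
theorem block_trichotomy (hcyc : ∀ v, IsInducedCycle G (lamC v))
    (hfar : ∀ v w, v ≠ w → FarApart G (lamC v) (lamC w) 4)
    (huw : u ≠ w) (hzu : z ∈ blockOf G lamC u) (hzw : z ∈ blockOf G lamC w) :
    lamC u ⊆ interiorOf G (lamC w) ∨ lamC w ⊆ interiorOf G (lamC u) ∨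
      {y | G.Reachable z y}.Finite := by
  have hdisj : ∀ p ∈ lamC u, p ∉ lamC w := fun p hp => cycles_disjoint hfar huw hp
  have hdisj' : ∀ p ∈ lamC w, p ∉ lamC u := fun p hp =>
    cycles_disjoint hfar (Ne.symm huw) hp
  rcases hzu with hzu | hzu
  · rcases hzw with hzw | hzw
    · exact absurd hzw (hdisj z hzu)
    · exact Or.inl (cycle_subset_interior (hcyc u) hzu hzw hdisj)
  · rcases hzw with hzw | hzw
    · exact Or.inr (Or.inl (cycle_subset_interior (hcyc w) hzw hzu hdisj'))
    · -- z in both interiors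
      by_cases hc1 : ∃ c ∈ lamC w, ReachAvoiding G (lamC u) z c
      · obtain ⟨c, hc, hr⟩ := hc1
        exact Or.inr (Or.inl (cycle_subset_interior (hcyc w) hc (interior_reach hzu hr) hdisj'))
      · by_cases hc2 : ∃ c ∈ lamC u, ReachAvoiding G (lamC w) z c
        · obtain ⟨c, hc, hr⟩ := hc2
          exact Or.inl (cycle_subset_interior (hcyc u) hc (interior_reach hzw hr) hdisj)
        · push_neg at hc1 hc2
          refine Or.inr (Or.inr (Set.Finite.subset hzu.2 ?_))
          have H : ∀ (a b : V) (q : G.Walk a b),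
              ReachAvoiding G (lamC u) z a → ReachAvoiding G (lamC w) z a →
              ReachAvoiding G (lamC u) z b := by
            intro a b q
            induction q with
            | nil => exact fun h _ => h
            | cons hadj q ihq =>
              intro h1 h2
              rename_i aa bb cc
              by_cases hbu : bb ∈ lamC u
              · exact absurd (reach_adj h2 hadj (hdisj bb hbu)) (fun hh => hc2 bb hbu hh)
              · by_cases hbw : bb ∈ lamC w
                · exact absurd (reach_adj h1 hadj hbu) (fun hh => hc1 bb hbw hh)
                · exact ihq (reach_adj h1 hadj hbu) (reach_adj h2 hadj hbw)
          rintro y ⟨p⟩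
          exact H z y p (reach_refl hzu.1) (reach_refl hzw.1)

/-- Nested cycles give nested blocks. -/
theorem block_nested (hcyc : ∀ v, IsInducedCycle G (lamC v))
    (h : lamC u ⊆ interiorOf G (lamC w)) :
    blockOf G lamC u ⊆ blockOf G lamC w := by
  rintro x (hx | hx)
  · exact Or.inr (h hx)
  · by_cases hxw : x ∈ lamC w
    · exact Or.inl hxw
    · exact Or.inr (interior_cascade (hcyc u).1 h hx hxw)

/-- Equal blocks of distinct indices force mutual interiors. -/
theorem block_eq_mutual (hfar : ∀ v w, v ≠ w → FarApart G (lamC v) (lamC w) 4)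
    (huw : u ≠ w) (h : blockOf G lamC u = blockOf G lamC w) :
    lamC u ⊆ interiorOf G (lamC w) ∧ lamC w ⊆ interiorOf G (lamC u) := by
  constructor
  · intro p hp
    have : p ∈ blockOf G lamC w := h ▸ Or.inl hp
    rcases this with h' | h'
    · exact absurd h' (cycles_disjoint hfar huw hp)
    · exact h'
  · intro p hp
    have : p ∈ blockOf G lamC u := h ▸ Or.inl hp
    rcases this with h' | h'
    · exact absurd h' (cycles_disjoint hfar (Ne.symm huw) hp)
    · exact h'

end Struct2

end CEx
namespace CEx

variable {G : SimpleGraph V} {lamC : ι → Set V} {par : ι → ι}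

theorem comp_eq_of_adj {x y : V} (h : G.Adj x y) :
    {p | G.Reachable x p} = {p | G.Reachable y p} := by
  ext p
  exact ⟨fun hp => h.symm.reachable.trans hp, fun hp => h.reachable.trans hp⟩

theorem block_coloring
    (htree₁ : ∀ v : ι, {w | ∃ n : ℕ, par^[n] w = v}.Finite)
    (htree₂ : ∀ (v : ι) (n : ℕ), par^[n + 1] v ≠ v)
    (hcyc : ∀ v, IsInducedCycle G (lamC v))
    (heven : ∀ v, Even (lamC v).ncard)
    (hfar : ∀ v w, v ≠ w → FarApart G (lamC v) (lamC w) 4)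
    (hnest : ∀ w, lamC w ⊆ interiorOf G (lamC (par w)))
    (hGvfin : ∀ v, (contrVerts G lamC par v).Finite)
    (h4col : ∀ v, Nonempty ((contrGraph G lamC par v).Coloring (Fin 4))) :
    ∀ (n : ℕ) (v : ι), (htree₁ v).toFinset.card = n → ∀ α : Fin 4,
      ∃ c : V → Fin 5,
        (∀ x y, x ∈ blockOf G lamC v → y ∈ blockOf G lamC v → G.Adj x y →
          {p | G.Reachable x p}.Infinite → c x ≠ c y) ∧
        (∀ x ∈ lamC v, c x = Fin.castSucc α ∨ c x = 4) := by
  classical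
  intro n
  induction n using Nat.strong_induction_on with
  | _ n ih =>
  intro v hcard α
  obtain ⟨γ⟩ := h4col v
  set σ : Fin 4 ≃ Fin 4 := Equiv.swap (γ ⟨Sum.inr v, mem_cv_v⟩) α with hσ
  obtain ⟨f, hf⟩ := even_cycle_two_coloring (hcyc v) (heven v)
  have hIH : ∀ u, (par u = v ∧ u ≠ v) → ∀ α' : Fin 4,
      ∃ c : V → Fin 5,
        (∀ x y, x ∈ blockOf G lamC u → y ∈ blockOf G lamC u → G.Adj x y →
          {p | G.Reachable x p}.Infinite → c x ≠ c y) ∧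
        (∀ x ∈ lamC u, c x = Fin.castSucc α' ∨ c x = 4) :=
    fun u hu => ih _ (hcard ▸ desc_ssubset htree₁ htree₂ hu.1 hu.2) u rfl
  set αc : ∀ u, (par u = v ∧ u ≠ v) → Fin 4 :=
    fun u hu => σ (γ ⟨Sum.inr u, mem_cv_child hu.1 hu.2⟩) with hαc
  set cc : ι → V → Fin 5 :=
    fun u => if hu : par u = v ∧ u ≠ v then (hIH u hu (αc u hu)).choose else fun _ => 0
    with hcc
  have hccP : ∀ u (hu : par u = v ∧ u ≠ v),
      (∀ x y, x ∈ blockOf G lamC u → y ∈ blockOf G lamC u → G.Adj x y →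
        {p | G.Reachable x p}.Infinite → cc u x ≠ cc u y) ∧
      (∀ x ∈ lamC u, cc u x = Fin.castSucc (αc u hu) ∨ cc u x = 4) := by
    intro u hu
    rw [hcc]
    simp only [dif_pos hu]
    exact (hIH u hu (αc u hu)).choose_spec
  set chP : V → Prop := fun x => ∃ u, (par u = v ∧ u ≠ v) ∧ x ∈ blockOf G lamC u ∧
      ∀ u', (par u' = v ∧ u' ≠ v) → x ∈ blockOf G lamC u' →
        blockOf G lamC u' ⊆ blockOf G lamC u with hchP
  set c : V → Fin 5 := fun x =>
    if x ∈ lamC v then (if f x then 4 else Fin.castSucc α)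
    else if hx : x ∈ ordinaryOf G lamC par v then
      Fin.castSucc (σ (γ ⟨Sum.inl x, mem_cv_ord hx⟩))
    else if h : chP x then cc h.choose x
    else 0 with hcdef
  have hcs4 : ∀ β : Fin 4, Fin.castSucc β ≠ (4 : Fin 5) := by decide
  have hcsinj : ∀ β β' : Fin 4, Fin.castSucc β = Fin.castSucc β' → β = β' := by decide
  -- evaluation lemmas
  have hcA : ∀ x, x ∈ lamC v → c x = if f x then 4 else Fin.castSucc α := by
    intro x hx
    rw [hcdef]
    simp only [if_pos hx]
  have hcB : ∀ x, x ∉ lamC v → ∀ hx : x ∈ ordinaryOf G lamC par v,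
      c x = Fin.castSucc (σ (γ ⟨Sum.inl x, mem_cv_ord hx⟩)) := by
    intro x hx1 hx
    rw [hcdef]
    simp only [if_neg hx1, dif_pos hx]
  have hcC : ∀ x, x ∉ lamC v → x ∉ ordinaryOf G lamC par v → ∀ h : chP x,
      c x = cc h.choose x := by
    intro x hx1 hx2 h
    rw [hcdef]
    simp only [if_neg hx1, dif_neg hx2, dif_pos h]
  -- existence of maximal child block
  have hmaxP : ∀ x, x ∈ interiorOf G (lamC v) → x ∉ ordinaryOf G lamC par v →
      {p | G.Reachable x p}.Infinite → chP x := by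
    intro x hxI hxo hinf
    rcases interior_decomp hxI with h | ⟨u0, h1, h2, h3⟩
    · exact absurd h hxo
    have hTfin : {u | (par u = v ∧ u ≠ v) ∧ x ∈ blockOf G lamC u}.Finite :=
      (children_finite htree₁ v).subset (fun u hu => hu.1)
    obtain ⟨m, hmT, hmax⟩ := Set.Finite.exists_maximalFor
      (fun u => blockOf G lamC u) _ hTfin ⟨u0, ⟨h1, h2⟩, h3⟩
    refine ⟨m, hmT.1, hmT.2, ?_⟩
    intro u' hu' hxu'
    by_cases he : u' = m
    · subst he; exact subset_rfl
    · rcases block_trichotomy hcyc hfar he hxu' hmT.2 with h | h | h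
      · exact block_nested hcyc h
      · have hle : blockOf G lamC m ⊆ blockOf G lamC u' := block_nested hcyc h
        exact hmax ⟨hu', hxu'⟩ hle
      · exact absurd h hinf
  -- case lemmas
  have hAB : ∀ x y, x ∈ lamC v → y ∉ lamC v → ∀ hy : y ∈ ordinaryOf G lamC par v,
      G.Adj x y → c x ≠ c y := by
    intro x y hx hy1 hy hadj
    rw [hcA x hx, hcB y hy1 hy]
    have hγ : γ ⟨Sum.inl y, mem_cv_ord hy⟩ ≠ γ ⟨Sum.inr v, mem_cv_v⟩ :=
      γ.valid (cadj_cyc hy hx hadj.symm)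
    have hσγ : σ (γ ⟨Sum.inl y, mem_cv_ord hy⟩) ≠ α := by
      rw [hσ]
      intro he
      apply hγ
      have := (Equiv.swap (γ ⟨Sum.inr v, mem_cv_v⟩) α).injective
        (a₁ := γ ⟨Sum.inl y, mem_cv_ord hy⟩) (a₂ := γ ⟨Sum.inr v, mem_cv_v⟩)
      apply this
      rw [Equiv.swap_apply_left]
      exact he
    by_cases hfx : f x
    · rw [if_pos hfx]
      exact fun he => hcs4 _ he.symm
    · rw [if_neg hfx]
      exact fun he => hσγ (hcsinj _ _ he.symm)
  have hAC : ∀ x y, x ∈ lamC v → y ∉ lamC v → y ∉ ordinaryOf G lamC par v →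
      chP y → G.Adj x y → {p | G.Reachable y p}.Infinite → False := by
    intro x y hx hy1 hy2 hPy hadj hinfy
    obtain ⟨hu, hyb, -⟩ := hPy.choose_spec
    set u := hPy.choose
    rcases hyb with hyl | hyI
    · exact far_no_edge (hfar v u (Ne.symm hu.2)) hx hyl hadj
    · have hxb : x ∈ blockOf G lamC u := interior_block_adj hyI hadj.symm
      rcases hxb with hxl | hxI
      · exact cycles_disjoint hfar hu.2 hxl hx
      · have hmut1 : lamC v ⊆ interiorOf G (lamC u) :=
          cycle_subset_interior (hcyc v) hx hxI
            (fun w hw => cycles_disjoint hfar (Ne.symm hu.2) hw)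
        have hmut2 : lamC u ⊆ interiorOf G (lamC v) := by
          have := hnest u
          rw [hu.1] at this
          exact this
        exact hinfy (mutual_comp_finite htree₁ htree₂ hcyc hGvfin hmut2 hmut1
          (Or.inr hyI))
  have hBC : ∀ x y, x ∉ lamC v → ∀ hx : x ∈ ordinaryOf G lamC par v, y ∉ lamC v →
      y ∉ ordinaryOf G lamC par v → ∀ hPy : chP y, G.Adj x y → c x ≠ c y := by
    intro x y hx1 hx hy1 hy2 hPy hadj
    obtain ⟨hu, hyb, -⟩ := hPy.choose_spec
    set u := hPy.choose with hudef
    have hyl : y ∈ lamC u := ord_touch_block hx hu.1 hu.2 hyb hadj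
    rw [hcB x hx1 hx, hcC y hy1 hy2 hPy]
    rcases (hccP u hu).2 y hyl with he | he
    · rw [he]
      intro hcontra
      have hγ : γ ⟨Sum.inl x, mem_cv_ord hx⟩ ≠ γ ⟨Sum.inr u, mem_cv_child hu.1 hu.2⟩ :=
        γ.valid (cadj_block hx hu.1 hu.2 (Or.inl hyl) hadj)
      exact hγ (σ.injective (hcsinj _ _ hcontra))
    · rw [he]
      exact hcs4 _
  have hCC : ∀ x y, x ∉ lamC v → x ∉ ordinaryOf G lamC par v → ∀ hPx : chP x,
      y ∉ lamC v → y ∉ ordinaryOf G lamC par v → ∀ hPy : chP y, G.Adj x y →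
      {p | G.Reachable x p}.Infinite → c x ≠ c y := by
    intro x y hx1 hx2 hPx hy1 hy2 hPy hadj hinf
    obtain ⟨hu, hxb, hxmax⟩ := hPx.choose_spec
    obtain ⟨hw, hyb, hymax⟩ := hPy.choose_spec
    set u := hPx.choose with hudef
    set w := hPy.choose with hwdef
    -- y ∈ block u or x ∈ block w
    have hcases : y ∈ blockOf G lamC u ∨ x ∈ blockOf G lamC w := by
      rcases hxb with hxl | hxI
      · rcases hyb with hyl | hyI
        · by_cases he : u = w
          · exact Or.inl (Or.inl (he ▸ hyl))
          · exact absurd hadj (far_no_edge (hfar u w he) hxl hyl)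
        · exact Or.inr (interior_block_adj hyI hadj.symm)
      · exact Or.inl (interior_block_adj hxI hadj)
    have hbeq : blockOf G lamC u = blockOf G lamC w := by
      rcases hcases with h | h
      · have h1 : blockOf G lamC u ⊆ blockOf G lamC w := hymax u hu h
        have h2 : blockOf G lamC w ⊆ blockOf G lamC u := hxmax w hw (h1 hxb)
        exact le_antisymm h1 h2
      · have h1 : blockOf G lamC w ⊆ blockOf G lamC u := hxmax w hw h
        have h2 : blockOf G lamC u ⊆ blockOf G lamC w := hymax u hu (h1 hyb)
        exact le_antisymm h2 h1
    have huw : u = w := by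
      by_contra he
      obtain ⟨m1, m2⟩ := block_eq_mutual hfar he hbeq
      exact hinf (mutual_comp_finite htree₁ htree₂ hcyc hGvfin m1 m2 hxb)
    rw [hcC x hx1 hx2 hPx, hcC y hy1 hy2 hPy, ← hudef, ← hwdef, ← huw]
    exact (hccP u hu).1 x y hxb (huw ▸ hyb) hadj hinf
  -- assemble
  refine ⟨c, ?_, ?_⟩
  · intro x y hxb hyb hadj hinf
    have hinfy : {p | G.Reachable y p}.Infinite := by
      rw [← comp_eq_of_adj hadj]; exact hinf
    by_cases hxA : x ∈ lamC v
    · by_cases hyA : y ∈ lamC v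
      · rw [hcA x hxA, hcA y hyA]
        have hne := hf x hxA y hyA hadj
        rcases Bool.eq_false_or_eq_true (f x) with hfx | hfx
        · have hfy : f y = false := by
            rcases Bool.eq_false_or_eq_true (f y) with h | h
            · exact absurd (hfx.trans h.symm) hne
            · exact h
          rw [hfx, hfy]
          exact fun he => hcs4 α he.symm
        · have hfy : f y = true := by
            rcases Bool.eq_false_or_eq_true (f y) with h | h
            · exact h
            · exact absurd (hfx.trans h.symm) hne
          rw [hfx, hfy]
          exact hcs4 α
      · have hyI : y ∈ interiorOf G (lamC v) := hyb.resolve_left hyA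
        by_cases hyB : y ∈ ordinaryOf G lamC par v
        · exact hAB x y hxA hyA hyB hadj
        · exact (hAC x y hxA hyA hyB (hmaxP y hyI hyB hinfy) hadj hinfy).elim
    · have hxI : x ∈ interiorOf G (lamC v) := hxb.resolve_left hxA
      by_cases hxB : x ∈ ordinaryOf G lamC par v
      · by_cases hyA : y ∈ lamC v
        · exact (hAB y x hyA hxA hxB hadj.symm).symm
        · by_cases hyB : y ∈ ordinaryOf G lamC par v
          · rw [hcB x hxA hxB, hcB y hyA hyB]
            intro he
            exact γ.valid (cadj_ord hxB hyB hadj) (σ.injective (hcsinj _ _ he))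
          · have hyI : y ∈ interiorOf G (lamC v) := hyb.resolve_left hyA
            exact hBC x y hxA hxB hyA hyB (hmaxP y hyI hyB hinfy) hadj
      · have hPx : chP x := hmaxP x hxI hxB hinf
        by_cases hyA : y ∈ lamC v
        · exact (hAC y x hyA hxA hxB hPx hadj.symm hinf).elim
        · by_cases hyB : y ∈ ordinaryOf G lamC par v
          · exact (hBC y x hyA hyB hxA hxB hPx hadj.symm).symm
          · have hyI : y ∈ interiorOf G (lamC v) := hyb.resolve_left hyA
            exact hCC x y hxA hxB hPx hyA hyB (hmaxP y hyI hyB hinfy) hadj hinf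
  · intro x hx
    rw [hcA x hx]
    by_cases hfx : f x
    · rw [if_pos hfx]; exact Or.inr rfl
    · rw [if_neg hfx]; exact Or.inl rfl

end CEx
namespace CEx

variable {G : SimpleGraph V} {lamC : ι → Set V} {par : ι → ι}

/-- A full proper colouring of the block of a childless vertex. -/
theorem childless_coloring
    (hcyc : ∀ v, IsInducedCycle G (lamC v))
    (heven : ∀ v, Even (lamC v).ncard)
    (h4col : ∀ v, Nonempty ((contrGraph G lamC par v).Coloring (Fin 4)))
    (t : ι) (ht : ∀ w, ¬ (par w = t ∧ w ≠ t)) :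
    ∃ c : V → Fin 5, ∀ x y, x ∈ blockOf G lamC t → y ∈ blockOf G lamC t →
      G.Adj x y → c x ≠ c y := by
  classical
  obtain ⟨γ⟩ := h4col t
  obtain ⟨f, hf⟩ := even_cycle_two_coloring (hcyc t) (heven t)
  have hcs4 : ∀ β : Fin 4, Fin.castSucc β ≠ (4 : Fin 5) := by decide
  have hcsinj : ∀ β β' : Fin 4, Fin.castSucc β = Fin.castSucc β' → β = β' := by decide
  have hord : ∀ x, x ∈ interiorOf G (lamC t) → x ∈ ordinaryOf G lamC par t := by
    intro x hx
    rcases interior_decomp hx with h | ⟨u, h1, h2, -⟩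
    · exact h
    · exact absurd ⟨h1, h2⟩ (ht u)
  set c : V → Fin 5 := fun x =>
    if x ∈ lamC t then (if f x then 4 else Fin.castSucc (γ ⟨Sum.inr t, mem_cv_v⟩))
    else if hx : x ∈ ordinaryOf G lamC par t then
      Fin.castSucc (γ ⟨Sum.inl x, mem_cv_ord hx⟩)
    else 0 with hcdef
  have hcA : ∀ x, x ∈ lamC t →
      c x = if f x then 4 else Fin.castSucc (γ ⟨Sum.inr t, mem_cv_v⟩) := by
    intro x hx; rw [hcdef]; simp only [if_pos hx]
  have hcB : ∀ x, x ∉ lamC t → ∀ hx : x ∈ ordinaryOf G lamC par t,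
      c x = Fin.castSucc (γ ⟨Sum.inl x, mem_cv_ord hx⟩) := by
    intro x hx1 hx; rw [hcdef]; simp only [if_neg hx1, dif_pos hx]
  have hAB : ∀ x y, x ∈ lamC t → y ∉ lamC t → ∀ hy : y ∈ ordinaryOf G lamC par t,
      G.Adj x y → c x ≠ c y := by
    intro x y hx hy1 hy hadj
    rw [hcA x hx, hcB y hy1 hy]
    have hγ : γ ⟨Sum.inl y, mem_cv_ord hy⟩ ≠ γ ⟨Sum.inr t, mem_cv_v⟩ :=
      γ.valid (cadj_cyc hy hx hadj.symm)
    by_cases hfx : f x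
    · rw [if_pos hfx]
      exact fun he => hcs4 _ he.symm
    · rw [if_neg hfx]
      exact fun he => hγ (hcsinj _ _ he.symm)
  refine ⟨c, fun x y hxb hyb hadj => ?_⟩
  by_cases hxA : x ∈ lamC t
  · by_cases hyA : y ∈ lamC t
    · rw [hcA x hxA, hcA y hyA]
      have hne := hf x hxA y hyA hadj
      rcases Bool.eq_false_or_eq_true (f x) with hfx | hfx
      · have hfy : f y = false := by
          rcases Bool.eq_false_or_eq_true (f y) with h | h
          · exact absurd (hfx.trans h.symm) hne
          · exact h
        rw [hfx, hfy]
        exact fun he => hcs4 _ he.symm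
      · have hfy : f y = true := by
          rcases Bool.eq_false_or_eq_true (f y) with h | h
          · exact h
          · exact absurd (hfx.trans h.symm) hne
        rw [hfx, hfy]
        exact hcs4 _
    · exact hAB x y hxA hyA (hord y (hyb.resolve_left hyA)) hadj
  · have hxo := hord x (hxb.resolve_left hxA)
    by_cases hyA : y ∈ lamC t
    · exact (hAB y x hyA hxA hxo hadj.symm).symm
    · have hyo := hord y (hyb.resolve_left hyA)
      rw [hcB x hxA hxo, hcB y hyA hyo]
      exact fun he => γ.valid (cadj_ord hxo hyo hadj) (hcsinj _ _ he)

/-- Every vertex of the component of the base point is eventually in a block of the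
ancestor chain. -/
theorem chain_coverage
    (hcyc : ∀ v, IsInducedCycle G (lamC v))
    (hnest : ∀ w, lamC w ⊆ interiorOf G (lamC (par w)))
    {v0 : ι} {x0 : V} (hx0 : x0 ∈ blockOf G lamC v0) :
    ∀ z, G.Reachable x0 z → ∃ k, z ∈ blockOf G lamC (par^[k] v0) := by
  intro z hz
  refine comp_subset_closed (S := {z | ∃ k, z ∈ blockOf G lamC (par^[k] v0)})
    ?_ ⟨0, hx0⟩ hz
  rintro a ⟨k, hk⟩ b hab
  rcases hk with hk | hk
  · refine ⟨k + 1, ?_⟩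
    have h1 : a ∈ interiorOf G (lamC (par^[k + 1] v0)) := by
      rw [Function.iterate_succ_apply']
      exact hnest _ hk
    exact interior_block_adj h1 hab
  · exact ⟨k, interior_block_adj hk hab⟩

theorem chain_mono
    (hcyc : ∀ v, IsInducedCycle G (lamC v))
    (hnest : ∀ w, lamC w ⊆ interiorOf G (lamC (par w)))
    (v0 : ι) : ∀ k m, k ≤ m →
      blockOf G lamC (par^[k] v0) ⊆ blockOf G lamC (par^[m] v0) := by
  intro k m hkm
  induction m with
  | zero => rw [Nat.le_zero.1 hkm]
  | succ m ihm =>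
    rcases Nat.lt_or_ge k (m + 1) with h | h
    · refine (ihm (by omega)).trans ?_
      apply block_nested hcyc
      rw [Function.iterate_succ_apply']
      exact hnest _
    · rw [Nat.le_antisymm hkm h]

theorem ulim_exists (U : Ultrafilter ℕ) (s : ℕ → Fin 5) : ∃ a, {k | s k = a} ∈ U := by
  obtain ⟨a, ha⟩ := (U.map s).eq_pure_of_finite
  refine ⟨a, ?_⟩
  have : {a} ∈ U.map s := by rw [ha]; exact Filter.mem_pure.2 rfl
  simpa [Ultrafilter.mem_map, Set.preimage] using this

end CEx


/-- Let `(T, λ)` be an even cycle exhaustion of `G` with corridors of width 4: `T` is a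
one-ended tree given by the parent map `par` (every vertex has finitely many descendants
and no `par`-cycles), each `λ(v)` is a non-selftouching cycle of even length, the cycles
are pairwise at graph distance at least 4, `λ(w) ⊆ int(λ(par w))`, and the complement of
the union of the cycles has only finite components.  If every contracted graph `G_v` is
properly 4-colorable, then `G` admits a proper 5-coloring. -/
theorem stmt_10 (G : SimpleGraph V) (lamC : ι → Set V) (par : ι → ι) [Infinite ι]
    (htree₁ : ∀ v : ι, {w | ∃ n : ℕ, par^[n] w = v}.Finite)
    (htree₂ : ∀ (v : ι) (n : ℕ), par^[n + 1] v ≠ v)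
    (hcyc : ∀ v, IsInducedCycle G (lamC v))
    (heven : ∀ v, Even (lamC v).ncard)
    (hfar : ∀ v w, v ≠ w → FarApart G (lamC v) (lamC w) 4)
    (hnest : ∀ w, lamC w ⊆ interiorOf G (lamC (par w)))
    (hexh : ∀ x ∉ ⋃ v, lamC v,
      {y | ReachAvoiding G (⋃ v, lamC v) x y}.Finite)
    (hGvfin : ∀ v, (contrVerts G lamC par v).Finite)
    (h4col : ∀ v, Nonempty ((contrGraph G lamC par v).Coloring (Fin 4))) :
    ∃ c : V → Fin 5, ∀ x y, G.Adj x y → c x ≠ c y := by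
  classical
  obtain ⟨t, ht⟩ := CEx.exists_childless htree₁ htree₂
  obtain ⟨cfin, hcfin⟩ := CEx.childless_coloring hcyc heven h4col t ht
  set U : Ultrafilter ℕ := Filter.hyperfilter ℕ with hU
  set rep : V → V := fun x => (G.connectedComponentMk x).out with hrepdef
  have hrep_reach : ∀ x, G.Reachable (rep x) x := by
    intro x
    apply SimpleGraph.ConnectedComponent.exact
    exact Quot.out_eq _
  have hrep_adj : ∀ x y, G.Adj x y → rep x = rep y := by
    intro x y h
    rw [hrepdef]
    simp only
    have he : G.connectedComponentMk x = G.connectedComponentMk y :=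
      SimpleGraph.ConnectedComponent.sound h.reachable
    rw [he]
  set v0 : V → ι := fun x => (CEx.exists_block hcyc hfar htree₂ hnest hexh (rep x)).choose
    with hv0def
  have hv0 : ∀ x, rep x ∈ blockOf G lamC (v0 x) :=
    fun x => (CEx.exists_block hcyc hfar htree₂ hnest hexh (rep x)).choose_spec
  set cseq : V → ℕ → V → Fin 5 := fun x k =>
    (CEx.block_coloring htree₁ htree₂ hcyc heven hfar hnest hGvfin h4col
      ((htree₁ (par^[k] (v0 x))).toFinset.card) (par^[k] (v0 x)) rfl 0).choose
    with hcseqdef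
  have hcseq : ∀ x k,
      (∀ z w, z ∈ blockOf G lamC (par^[k] (v0 x)) → w ∈ blockOf G lamC (par^[k] (v0 x)) →
        G.Adj z w → {p | G.Reachable z p}.Infinite → cseq x k z ≠ cseq x k w) ∧
      (∀ z ∈ lamC (par^[k] (v0 x)), cseq x k z = Fin.castSucc 0 ∨ cseq x k z = 4) :=
    fun x k => (CEx.block_coloring htree₁ htree₂ hcyc heven hfar hnest hGvfin h4col
      ((htree₁ (par^[k] (v0 x))).toFinset.card) (par^[k] (v0 x)) rfl 0).choose_spec
  set c : V → Fin 5 := fun x =>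
    if {p | G.Reachable x p}.Finite then cfin x
    else (CEx.ulim_exists U (fun k => cseq x k x)).choose with hcdef
  refine ⟨c, fun x y hadj => ?_⟩
  have hcomp : {p | G.Reachable x p} = {p | G.Reachable y p} := CEx.comp_eq_of_adj hadj
  have hrxy : rep x = rep y := hrep_adj x y hadj
  have hv0xy : v0 x = v0 y := by
    rw [hv0def]
    simp only
    rw [hrxy]
  have hcseqxy : ∀ k, cseq x k = cseq y k := by
    intro k
    rw [hcseqdef]
    simp only
    rw [hv0xy]
  by_cases hfin : {p | G.Reachable x p}.Finite
  · have hfiny : {p | G.Reachable y p}.Finite := hcomp ▸ hfin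
    have hbt : ∀ z, {p | G.Reachable z p}.Finite → z ∈ blockOf G lamC t := by
      intro z hz
      by_cases hzt : z ∈ lamC t
      · exact Or.inl hzt
      · refine Or.inr ⟨hzt, hz.subset ?_⟩
        rintro p ⟨q, hq⟩
        exact ⟨q⟩
    rw [hcdef]
    simp only
    rw [if_pos hfin, if_pos hfiny]
    exact hcfin x y (hbt x hfin) (hbt y hfiny) hadj
  · have hfiny : ¬ {p | G.Reachable y p}.Finite := by rw [← hcomp]; exact hfin
    rw [hcdef]
    simp only
    rw [if_neg hfin, if_neg hfiny]
    have haspec : {k | cseq x k x = (CEx.ulim_exists U (fun k => cseq x k x)).choose} ∈ U :=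
      (CEx.ulim_exists U (fun k => cseq x k x)).choose_spec
    have hbspec : {k | cseq y k y = (CEx.ulim_exists U (fun k => cseq y k y)).choose} ∈ U :=
      (CEx.ulim_exists U (fun k => cseq y k y)).choose_spec
    obtain ⟨kx, hkx⟩ := CEx.chain_coverage hcyc hnest (hv0 x) x (hrep_reach x)
    obtain ⟨ky, hky⟩ := CEx.chain_coverage hcyc hnest (hv0 y) y (hrep_reach y)
    have hcof : {k | max kx ky ≤ k} ∈ U := by
      rw [hU]
      apply Filter.mem_hyperfilter_of_finite_compl
      apply Set.Finite.subset (Set.finite_Iio (max kx ky))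
      intro k hk
      simp only [Set.mem_compl_iff, Set.mem_setOf_eq, not_le] at hk
      exact hk
    have hK : ({k | cseq x k x = (CEx.ulim_exists U (fun k => cseq x k x)).choose} ∩
        ({k | cseq y k y = (CEx.ulim_exists U (fun k => cseq y k y)).choose} ∩
          {k | max kx ky ≤ k})) ∈ U :=
      Filter.inter_mem haspec (Filter.inter_mem hbspec hcof)
    obtain ⟨k, hk1, hk2, hk3⟩ := Filter.nonempty_of_mem hK
    intro he
    have hx' : x ∈ blockOf G lamC (par^[k] (v0 x)) :=
      CEx.chain_mono hcyc hnest (v0 x) kx k (le_trans (le_max_left _ _) hk3) hkx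
    have hy' : y ∈ blockOf G lamC (par^[k] (v0 x)) := by
      rw [hv0xy]
      exact CEx.chain_mono hcyc hnest (v0 y) ky k (le_trans (le_max_right _ _) hk3) hky
    have hprop := (hcseq x k).1 x y hx' hy' hadj hfin
    apply hprop
    rw [Set.mem_setOf_eq] at hk1 hk2
    rw [hk1, he]
    rw [← hk2, ← hcseqxy k]
end
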